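/- Let S, G* be functions on [0,M] with S decreasing (a survival function), G* decreasing on [0, V̄) and on [V̄, M] separately with a possible upward jump at V̄, i.e. G*(V̄−) ≤ G*(V̄). Suppose G*(V̄−) < S(V̄) < G*(V̄) and set b = S(V̄), a₁ = sup{x ∈ [0,V̄) : G*(x) ≥ b}, a₂ = sup{x ∈ [V̄,M) : G*(x) ≥ b}. Define S̃(x) = (G*(x) ∨ b) on [0,V̄] and (G*(x) ∧ b) on [V̄,M]. Then S̃ is decreasing on [0,M], and for every x ∈ [a₁, a₂): either S(x) ≥ S̃(x) ≥ G*(x) (for x ∈ [a₁,V̄)) or S(x) ≤ S̃(x) ≤ G*(x) (for x ∈ [V̄,a₂)); in particular S̃ lies pointwise between S and G* on [a₁,a₂). -/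
import Mathlib


/-- flattening the pointwise optimizer `G*` at level `b = S(V̄)`
yields a decreasing function `S̃` lying pointwise between `S` and `G*` on
`[a₁, a₂)`. -/
theorem flattened_optimizer_between (M Vbar : ℝ) (hM : 0 < M)
    (hV : Vbar ∈ Set.Ioo 0 M) (S Gstar : ℝ → ℝ)
    (hS : AntitoneOn S (Set.Icc 0 M))
    (hG1 : AntitoneOn Gstar (Set.Ico 0 Vbar))
    (hG2 : AntitoneOn Gstar (Set.Icc Vbar M))
    (hG1rc : ∀ x ∈ Set.Ico (0:ℝ) Vbar, ContinuousWithinAt Gstar (Set.Ici x) x)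
    (hG2rc : ∀ x ∈ Set.Icc Vbar M, ContinuousWithinAt Gstar (Set.Ici x) x)
    (hjump : Function.leftLim Gstar Vbar ≤ Gstar Vbar)
    (hlt : Function.leftLim Gstar Vbar < S Vbar)
    (hlt' : S Vbar < Gstar Vbar) :
    AntitoneOn
      (fun x => if x < Vbar then max (Gstar x) (S Vbar) else min (Gstar x) (S Vbar))
      (Set.Icc 0 M) ∧
    (∀ x ∈ Set.Ico (sSup {x | x ∈ Set.Ico (0:ℝ) Vbar ∧ S Vbar ≤ Gstar x}) Vbar,
      Gstar x ≤
        (if x < Vbar then max (Gstar x) (S Vbar) else min (Gstar x) (S Vbar)) ∧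
      (if x < Vbar then max (Gstar x) (S Vbar) else min (Gstar x) (S Vbar)) ≤ S x) ∧
    (∀ x ∈ Set.Ico Vbar (sSup {x | x ∈ Set.Ico Vbar M ∧ S Vbar ≤ Gstar x}),
      S x ≤
        (if x < Vbar then max (Gstar x) (S Vbar) else min (Gstar x) (S Vbar)) ∧
      (if x < Vbar then max (Gstar x) (S Vbar) else min (Gstar x) (S Vbar)) ≤ Gstar x) := by
  obtain ⟨hV0, hVM⟩ := hV
  set b := S Vbar with hb
  refine ⟨?_, ?_, ?_⟩
  · -- antitone
    intro x hx y hy hxy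
    simp only
    by_cases hxV : x < Vbar
    · by_cases hyV : y < Vbar
      · rw [if_pos hxV, if_pos hyV]
        exact max_le_max (hG1 ⟨hx.1, hxV⟩ ⟨hy.1, hyV⟩ hxy) le_rfl
      · rw [if_pos hxV, if_neg hyV]
        exact le_trans (min_le_right _ _) (le_max_right _ _)
    · have hyV : ¬ y < Vbar := fun h => hxV (lt_of_le_of_lt hxy h)
      rw [if_neg hxV, if_neg hyV]
      exact min_le_min (hG2 ⟨le_of_not_gt hxV, hx.2⟩ ⟨le_of_not_gt hyV, hy.2⟩ hxy) le_rfl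
  · -- left part
    set A : Set ℝ := {x | x ∈ Set.Ico (0:ℝ) Vbar ∧ b ≤ Gstar x} with hA
    have hAbdd : BddAbove A := ⟨Vbar, fun z hz => le_of_lt hz.1.2⟩
    have ha0 : 0 ≤ sSup A := Real.sSup_nonneg (fun z hz => hz.1.1)
    -- strict bound to the right of sSup A
    have key : ∀ y, sSup A < y → y < Vbar → Gstar y < b := by
      intro y h1 h2
      by_contra h
      push_neg at h
      exact absurd (le_csSup hAbdd ⟨⟨le_trans ha0 h1.le, h2⟩, h⟩) (not_le.mpr h1)
    intro x hx
    have hx0 : 0 ≤ x := le_trans ha0 hx.1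
    have hGb : Gstar x ≤ b := by
      rcases eq_or_lt_of_le hx.1 with heq | hlt2
      · -- x = sSup A : use right-continuity
        have hxV : sSup A < Vbar := heq ▸ hx.2
        have hcont := (hG1rc (sSup A) ⟨ha0, hxV⟩).mono (Set.Ioi_subset_Ici le_rfl)
        have hsup : Gstar (sSup A) ≤ b := by
          refine le_of_tendsto hcont ?_
          filter_upwards [Ioo_mem_nhdsGT_of_mem ⟨le_rfl, hxV⟩] with y hy
          exact (key y hy.1 hy.2).le
        rwa [← heq]
      · exact (key x hlt2 hx.2).le
    have hSb : b ≤ S x := hS ⟨hx0, le_of_lt (lt_of_lt_of_le hx.2 hVM.le)⟩ ⟨hV0.le, hVM.le⟩ hx.2.le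
    rw [if_pos hx.2]
    exact ⟨le_max_left _ _, max_le (hGb.trans hSb) hSb⟩
  · -- right part
    set B : Set ℝ := {x | x ∈ Set.Ico Vbar M ∧ b ≤ Gstar x} with hB
    have hBbdd : BddAbove B := ⟨M, fun z hz => le_of_lt hz.1.2⟩
    intro x hx
    have hBne : B.Nonempty := by
      by_contra h
      rw [Set.not_nonempty_iff_eq_empty] at h
      rw [h] at hx
      simp [Real.sSup_empty] at hx
      exact absurd (lt_of_le_of_lt hx.1 hx.2) (not_lt.mpr hV0.le)
    obtain ⟨y, hyB, hxy⟩ := (lt_csSup_iff hBbdd hBne).mp hx.2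
    have hxM : x < M := lt_of_lt_of_le hxy hyB.1.2.le
    have hGb : b ≤ Gstar x := le_trans hyB.2
      (hG2 ⟨hx.1, hxM.le⟩ ⟨hyB.1.1, hyB.1.2.le⟩ hxy.le)
    have hSb : S x ≤ b := hS ⟨hV0.le, hVM.le⟩ ⟨le_trans hV0.le hx.1, hxM.le⟩ hx.1
    rw [if_neg (not_lt.mpr hx.1)]
    exact ⟨le_min (hSb.trans hGb) hSb, min_le_left _ _⟩
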